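/- For m ≥ 2 and n with base m representation (α_j,...,α_0), c_m(mn) ≡ α_0 + (α_0 − 1)·Σ_{i=1}^{j} (α_1 − χ_1)(α_2 − χ_2)···(α_i − χ_i) (mod m), where χ_i = 0 if α_{i-1} > 0 and χ_i = 1 if α_{i-1} = 0. -/

import Mathlib

noncomputable def cm (m n : ℕ) : ℕ :=
  Nat.card {f : ℕ →₀ ℕ // (∑ i ∈ f.support, f i * m ^ i = n) ∧
    ∀ i k, f i ≠ 0 → k ≤ i → f k ≠ 0}

def chi (α : ℕ → ℕ) (i : ℕ) : ℕ := if α (i - 1) = 0 then 1 else 0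

open Finsupp Finset

def sumval (m : ℕ) (f : ℕ →₀ ℕ) : ℕ := f.sum fun i c => c * m ^ i

def GF (f : ℕ →₀ ℕ) : Prop := ∀ i k, f i ≠ 0 → k ≤ i → f k ≠ 0

lemma cm_eq (m n : ℕ) : cm m n = Nat.card {f : ℕ →₀ ℕ // sumval m f = n ∧ GF f} := rfl

section plumbing


noncomputable def shiftF (f : ℕ →₀ ℕ) : ℕ →₀ ℕ :=
  Finsupp.comapDomain Nat.succ f (Nat.succ_injective.injOn)

lemma shiftF_apply (f : ℕ →₀ ℕ) (i : ℕ) : shiftF f i = f (i+1) := rfl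

lemma mapD_zero (g : ℕ →₀ ℕ) : Finsupp.mapDomain Nat.succ g 0 = 0 := by
  apply Finsupp.mapDomain_notin_range
  rintro ⟨k, hk⟩; exact Nat.succ_ne_zero k hk

lemma mapD_succ (g : ℕ →₀ ℕ) (i : ℕ) : Finsupp.mapDomain Nat.succ g (i+1) = g i :=
  Finsupp.mapDomain_apply Nat.succ_injective g i

lemma decompF (f : ℕ →₀ ℕ) :
    f = Finsupp.single 0 (f 0) + Finsupp.mapDomain Nat.succ (shiftF f) := by
  ext i
  cases i with
  | zero => simp [mapD_zero]
  | succ k => simp [mapD_succ, shiftF_apply, Finsupp.single_eq_of_ne (Ne.symm (Nat.succ_ne_zero k))]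

lemma sumval_mapD (m : ℕ) (g : ℕ →₀ ℕ) :
    sumval m (Finsupp.mapDomain Nat.succ g) = m * sumval m g := by
  unfold sumval
  rw [Finsupp.sum_mapDomain_index (by simp) (by intros; ring)]
  rw [Finsupp.mul_sum]
  congr 1; ext i c; rw [pow_succ]; ring

lemma sumval_decomp (m : ℕ) (f : ℕ →₀ ℕ) :
    sumval m f = f 0 + m * sumval m (shiftF f) := by
  conv_lhs => rw [decompF f]
  unfold sumval
  rw [Finsupp.sum_add_index' (by simp) (by intros; ring)]
  rw [Finsupp.sum_single_index (by simp)]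
  have := sumval_mapD m (shiftF f)
  unfold sumval at this
  rw [this, pow_zero, mul_one]

end plumbing

lemma term_le {m N : ℕ} {f : ℕ →₀ ℕ} (h : sumval m f = N) (i : ℕ) :
    f i * m ^ i ≤ N := by
  rcases eq_or_ne (f i) 0 with h0 | h0
  · simp [h0]
  · have hi : i ∈ f.support := Finsupp.mem_support_iff.2 h0
    calc f i * m ^ i ≤ ∑ a ∈ f.support, f a * m ^ a :=
          Finset.single_le_sum (f := fun a => f a * m ^ a) (fun a _ => Nat.zero_le _) hi
      _ = N := h

lemma apply_le {m N : ℕ} {f : ℕ →₀ ℕ} (hm : 2 ≤ m) (h : sumval m f = N) (i : ℕ) :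
    f i ≤ N := by
  have := term_le h i
  have hp : 1 ≤ m ^ i := Nat.one_le_pow _ _ (by omega)
  calc f i = f i * 1 := (mul_one _).symm
    _ ≤ f i * m ^ i := Nat.mul_le_mul_left _ hp
    _ ≤ N := this

lemma apply_eq_zero {m N : ℕ} {f : ℕ →₀ ℕ} (hm : 2 ≤ m) (h : sumval m f = N) {i : ℕ}
    (hi : N < i) : f i = 0 := by
  by_contra h0
  have h1 : m ^ i ≤ N := by
    have := term_le h i
    calc m ^ i = 1 * m ^ i := (one_mul _).symm
      _ ≤ f i * m ^ i := Nat.mul_le_mul_right _ (Nat.one_le_iff_ne_zero.2 h0)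
      _ ≤ N := this
  have h2 : i < 2 ^ i := Nat.lt_two_pow_self
  have h3 : 2 ^ i ≤ m ^ i := Nat.pow_le_pow_left hm i
  omega

lemma finiteA (m N : ℕ) (hm : 2 ≤ m) :
    Finite {f : ℕ →₀ ℕ // sumval m f = N ∧ GF f} := by
  apply Finite.of_injective
    (fun f : {f : ℕ →₀ ℕ // sumval m f = N ∧ GF f} =>
      (fun i : Fin (N+1) => (⟨f.1 i, Nat.lt_succ_of_le (apply_le hm f.2.1 i)⟩ : Fin (N+1))))
  intro f g hfg
  apply Subtype.ext; ext i
  rcases le_or_gt i N with hi | hi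
  · have := congrFun hfg ⟨i, Nat.lt_succ_of_le hi⟩
    exact congrArg Fin.val this
  · rw [apply_eq_zero hm f.2.1 hi, apply_eq_zero hm g.2.1 hi]

lemma ceil_lt_iff {m N r : ℕ} (hm : 2 ≤ m) (hN : N ≠ 0) :
    r < (N + m - 1) / m ↔ m * r < N := by
  have h := Nat.le_div_iff_mul_le (k := m) (x := r + 1) (y := N + m - 1) (by omega)
  constructor
  · intro hr
    have := h.1 hr
    have e : (r+1) * m = r * m + m := by ring
    rw [e] at this
    have e2 : m * r = r * m := Nat.mul_comm m r
    omega
  · intro hr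
    apply Nat.lt_of_succ_le
    apply h.2
    have e : (r+1) * m = m * r + m := by ring
    omega
lemma f0_ne {m N : ℕ} (hN : N ≠ 0) {f : ℕ →₀ ℕ} (h1 : sumval m f = N) (h2 : GF f) :
    f 0 ≠ 0 := by
  have hf : f ≠ 0 := by
    rintro rfl
    simp [sumval] at h1
    exact hN h1.symm
  obtain ⟨i, hi⟩ := DFunLike.ne_iff.1 hf
  exact h2 i 0 (by simpa using hi) (Nat.zero_le i)

lemma back0 (t : ℕ) (g : ℕ →₀ ℕ) :
    (Finsupp.single 0 t + Finsupp.mapDomain Nat.succ g : ℕ →₀ ℕ) 0 = t := by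
  simp [mapD_zero]

lemma backsucc (t : ℕ) (g : ℕ →₀ ℕ) (i : ℕ) :
    (Finsupp.single 0 t + Finsupp.mapDomain Nat.succ g : ℕ →₀ ℕ) (i + 1) = g i := by
  simp [mapD_succ, Finsupp.single_eq_of_ne (Ne.symm (Nat.succ_ne_zero i))]

lemma shift_back (t : ℕ) (g : ℕ →₀ ℕ) :
    shiftF (Finsupp.single 0 t + Finsupp.mapDomain Nat.succ g) = g := by
  ext i
  rw [shiftF_apply, backsucc]

lemma sumval_back (m t : ℕ) (g : ℕ →₀ ℕ) :
    sumval m (Finsupp.single 0 t + Finsupp.mapDomain Nat.succ g) = t + m * sumval m g := by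
  unfold sumval
  rw [Finsupp.sum_add_index' (by simp) (by intros; ring),
    Finsupp.sum_single_index (by simp)]
  have := sumval_mapD m g
  unfold sumval at this
  rw [this, pow_zero, mul_one]

noncomputable def keyEquiv (m N : ℕ) (hm : 2 ≤ m) (hN : N ≠ 0) :
    {f : ℕ →₀ ℕ // sumval m f = N ∧ GF f} ≃
      Σ r : Fin ((N + m - 1) / m), {g : ℕ →₀ ℕ // sumval m g = (r : ℕ) ∧ GF g} where
  toFun f := ⟨⟨sumval m (shiftF f.1), by
      rw [ceil_lt_iff hm hN]
      have hd := sumval_decomp m f.1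
      rw [f.2.1] at hd
      have h0 := f0_ne hN f.2.1 f.2.2
      omega⟩,
    ⟨shiftF f.1, rfl, fun i k hi hk =>
      f.2.2 (i+1) (k+1) (by rwa [shiftF_apply] at hi) (by omega)⟩⟩
  invFun p := ⟨Finsupp.single 0 (N - m * p.1.1) + Finsupp.mapDomain Nat.succ p.2.1, by
      have hr : m * p.1.1 < N := (ceil_lt_iff hm hN).1 p.1.2
      rw [sumval_back, p.2.2.1]
      omega, by
      have hr : m * p.1.1 < N := (ceil_lt_iff hm hN).1 p.1.2
      intro i k hi hk
      cases k with
      | zero => rw [back0]; omega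
      | succ k' =>
        cases i with
        | zero => exact absurd hk (by omega)
        | succ i' =>
          rw [backsucc] at hi ⊢
          exact p.2.2.2 i' k' hi (by omega)⟩
  left_inv f := by
    apply Subtype.ext
    have hd := sumval_decomp m f.1
    rw [f.2.1] at hd
    show Finsupp.single 0 (N - m * sumval m (shiftF f.1)) + _ = f.1
    have he : N - m * sumval m (shiftF f.1) = f.1 0 := by omega
    rw [he]
    exact (decompF f.1).symm
  right_inv p := by
    obtain ⟨⟨r, hr⟩, g, hg1, hg2⟩ := p
    have hsf : shiftF (Finsupp.single 0 (N - m * r) + Finsupp.mapDomain Nat.succ g) = g :=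
      shift_back _ _
    have hs : sumval m (shiftF (Finsupp.single 0 (N - m * r) + Finsupp.mapDomain Nat.succ g))
        = r := by rw [hsf, hg1]
    apply Sigma.ext
    · exact Fin.ext hs
    · refine (Subtype.heq_iff_coe_eq ?_).2 hsf
      intro x
      simp only [hs]

lemma key (m N : ℕ) (hm : 2 ≤ m) (hN : N ≠ 0) :
    cm m N = ∑ r ∈ Finset.range ((N + m - 1) / m), cm m r := by
  haveI := finiteA m N hm
  haveI : ∀ r : ℕ, Finite {g : ℕ →₀ ℕ // sumval m g = r ∧ GF g} := fun r => finiteA m r hm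
  rw [cm_eq, Nat.card_congr (keyEquiv m N hm hN)]
  haveI : ∀ r : Fin ((N + m - 1) / m),
      Fintype {g : ℕ →₀ ℕ // sumval m g = (r : ℕ) ∧ GF g} := fun r => Fintype.ofFinite _
  rw [Nat.card_eq_fintype_card, Fintype.card_sigma, ← Fin.sum_univ_eq_sum_range]
  congr 1
  ext r
  rw [cm_eq, Nat.card_eq_fintype_card]

lemma cm_zero (m : ℕ) (hm : 2 ≤ m) : cm m 0 = 1 := by
  rw [cm_eq]
  haveI : Unique {f : ℕ →₀ ℕ // sumval m f = 0 ∧ GF f} := by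
    refine ⟨⟨⟨0, by simp [sumval], ?_⟩⟩, ?_⟩
    · intro i k hi hk
      simp at hi
    rintro ⟨f, h1, h2⟩
    apply Subtype.ext
    ext i
    simp only [Finsupp.coe_zero, Pi.zero_apply]
    by_contra h0
    have ht := term_le h1 i
    have hp : 0 < m ^ i := pow_pos (by omega) i
    have : 0 < f i * m ^ i := Nat.mul_pos (Nat.pos_of_ne_zero h0) hp
    omega
  exact Nat.card_unique

def cRec (m : ℕ) : ℕ → ℕ
  | 0 => 1
  | (N+1) => ∑ r ∈ (Finset.range ((N + 1 + m - 1) / m)).attach,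
      have hr : (r : ℕ) < N + 1 := by
        have h2 := Finset.mem_range.1 r.2
        rcases Nat.eq_zero_or_pos m with hm | hm
        · subst hm; simp at h2
        · have h3 : ((r:ℕ) + 1) * m ≤ N + 1 + m - 1 :=
            (Nat.le_div_iff_mul_le hm).1 h2
          have h4 : (r:ℕ) ≤ (r:ℕ) * m := Nat.le_mul_of_pos_right _ hm
          have h5 : ((r:ℕ) + 1) * m = (r:ℕ) * m + m := by ring
          have h6 : N + 1 + m - 1 = N + m := by omega
          linarith
      cRec m (r : ℕ)

lemma cRec_zero (m : ℕ) : cRec m 0 = 1 := by rw [cRec]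

lemma cRec_pos (m N : ℕ) (hN : N ≠ 0) :
    cRec m N = ∑ r ∈ Finset.range ((N + m - 1) / m), cRec m r := by
  obtain ⟨K, rfl⟩ := Nat.exists_eq_succ_of_ne_zero hN
  rw [cRec]
  exact Finset.sum_attach _ _

lemma cm_eq_cRec (m : ℕ) (hm : 2 ≤ m) : ∀ N, cm m N = cRec m N := by
  intro N
  induction N using Nat.strong_induction_on with
  | _ N ih =>
    rcases eq_or_ne N 0 with rfl | hN
    · rw [cm_zero m hm, cRec_zero]
    · rw [key m N hm hN, cRec_pos m N hN]
      apply Finset.sum_congr rfl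
      intro r hr
      apply ih
      have h2 : m * r < N := (ceil_lt_iff hm hN).1 (Finset.mem_range.1 hr)
      have h4 : r ≤ m * r := Nat.le_mul_of_pos_left _ (by omega)
      omega

def Snat (m n : ℕ) : ℕ := ∑ r ∈ Finset.range n, cRec m r

lemma Snat_succ (m k : ℕ) : Snat m (k + 1) = Snat m k + cRec m k :=
  Finset.sum_range_succ _ _

lemma Snat_one (m : ℕ) : Snat m 1 = 1 := by
  rw [Snat, Finset.sum_range_one, cRec_zero]

lemma Snat_add (m k d : ℕ) :
    Snat m (k + d) = Snat m k + ∑ b ∈ Finset.range d, cRec m (k + b) := by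
  induction d with
  | zero => simp
  | succ d ihd =>
    rw [← Nat.add_assoc, Snat_succ, ihd, Finset.sum_range_succ]
    omega

lemma div_small_one (m b : ℕ) (hm : 2 ≤ m) (hb1 : 1 ≤ b) (hbm : b ≤ m) :
    (b + m - 1) / m = 1 := by
  have h1 : b + m - 1 = m * 1 + (b - 1) := by omega
  rw [h1, Nat.mul_add_div (by omega), Nat.div_eq_of_lt (by omega)]

lemma cRec_mul (m u : ℕ) (hm : 2 ≤ m) (hu : u ≠ 0) : cRec m (m * u) = Snat m u := by
  rw [cRec_pos m _ (by positivity)]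
  have h1 : m * u + m - 1 = m * u + (m - 1) := by omega
  rw [h1, Nat.mul_add_div (by omega), Nat.div_eq_of_lt (by omega)]
  rfl

lemma cRec_mul_add (m u b : ℕ) (hm : 2 ≤ m) (hb1 : 1 ≤ b) (hbm : b < m) :
    cRec m (m * u + b) = Snat m (u + 1) := by
  rw [cRec_pos m _ (by omega)]
  have h1 : m * u + b + m - 1 = m * u + (b + m - 1) := by omega
  rw [h1, Nat.mul_add_div (by omega), div_small_one m b hm hb1 (by omega)]
  rfl

lemma Snat_small (m : ℕ) (hm : 2 ≤ m) : ∀ a, a ≤ m → Snat m a = a := by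
  intro a
  induction a with
  | zero => intro _; simp [Snat]
  | succ a iha =>
    intro ha
    rw [Snat_succ, iha (by omega)]
    rcases eq_or_ne a 0 with rfl | ha0
    · rw [cRec_zero]
    · have : cRec m a = Snat m 1 := by
        have := cRec_mul_add m 0 a hm (by omega) (by omega)
        simpa using this
      rw [this, Snat_one]

section zmod

lemma castm1 (m : ℕ) (hm : 2 ≤ m) : ((m - 1 : ℕ) : ZMod m) = -1 := by
  rw [Nat.cast_sub (by omega : 1 ≤ m)]
  simp [ZMod.natCast_self]

lemma block_sum (m : ℕ) (hm : 2 ≤ m) (q : ℕ) (hq : q ≠ 0) :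
    ∑ b ∈ Finset.range m, cRec m (m * q + b)
      = Snat m q + (m - 1) * Snat m (q + 1) := by
  obtain ⟨M, hM⟩ : ∃ M, m = M + 1 := ⟨m - 1, by omega⟩
  subst hM
  rw [Finset.sum_range_succ']
  have h1 : ∀ b ∈ Finset.range M, cRec ((M+1)) ((M+1) * q + (b+1)) = Snat (M+1) (q+1) := by
    intro b hb
    exact cRec_mul_add (M+1) q (b+1) hm (by omega)
      (by have := Finset.mem_range.1 hb; omega)
  rw [Finset.sum_congr rfl h1, Finset.sum_const, smul_eq_mul, Finset.card_range]
  simp only [Nat.add_zero]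
  rw [cRec_mul (M+1) q hm hq]
  have h2 : M + 1 - 1 = M := by omega
  rw [h2]
  omega

lemma C1 (m : ℕ) (hm : 2 ≤ m) : ∀ q, q ≠ 0 → ((Snat m (m * q) : ZMod m) = 1 - (Snat m q : ZMod m)) := by
  intro q
  induction q with
  | zero => intro h; omega
  | succ q ihq =>
    intro _
    rcases eq_or_ne q 0 with rfl | hq
    · rw [Nat.mul_one, Snat_small m hm m le_rfl, Snat_one]
      simp
    · have hmul : m * (q + 1) = m * q + m := by ring
      rw [hmul, Snat_add, block_sum m hm q hq, Snat_succ]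
      push_cast [castm1 m hm]
      rw [ihq hq]
      ring

lemma C2 (m : ℕ) (hm : 2 ≤ m) (q a : ℕ) (hq : q ≠ 0) (ha1 : 1 ≤ a) (ham : a ≤ m) :
    ((Snat m (m * q + a) : ZMod m)
      = 1 + ((a : ZMod m) - 1) * (Snat m (q + 1) : ZMod m)) := by
  rw [Snat_add]
  obtain ⟨A, hA⟩ : ∃ A, a = A + 1 := ⟨a - 1, by omega⟩
  subst hA
  rw [Finset.sum_range_succ']
  have h1 : ∀ b ∈ Finset.range A, cRec m (m * q + (b+1)) = Snat m (q+1) := by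
    intro b hb
    exact cRec_mul_add m q (b+1) hm (by omega)
      (by have := Finset.mem_range.1 hb; omega)
  rw [Finset.sum_congr rfl h1, Finset.sum_const, smul_eq_mul, Finset.card_range]
  simp only [Nat.add_zero]
  rw [cRec_mul m q hm hq]
  push_cast
  rw [C1 m hm q hq]
  ring

lemma Grec (m : ℕ) (hm : 2 ≤ m) (q : ℕ) :
    ((Snat m (q + 1) : ZMod m)
      = 1 + ((q % m : ℕ) : ZMod m) * (Snat m (q / m + 1) : ZMod m)) := by
  rcases lt_or_ge q m with hq | hq
  · rw [Nat.mod_eq_of_lt hq, Nat.div_eq_of_lt hq]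
    rw [Snat_small m hm (q + 1) (by omega), Snat_one]
    push_cast
    ring
  · have hr : q / m ≠ 0 := by
      have := Nat.one_le_div_iff (by omega : 0 < m) |>.2 hq
      omega
    have hb : q % m < m := Nat.mod_lt _ (by omega)
    have hqe : q = m * (q / m) + q % m := (Nat.div_add_mod q m).symm
    rcases eq_or_ne (q % m) (m - 1) with he | he
    · have h1 : q + 1 = m * (q / m + 1) := by
        have h2 : m * (q / m + 1) = m * (q / m) + m := by ring
        omega
      rw [h1, C1 m hm (q / m + 1) (Nat.succ_ne_zero _), he, castm1 m hm]
      ring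
    · have h1 : q + 1 = m * (q / m) + (q % m + 1) := by omega
      rw [h1, C2 m hm (q / m) (q % m + 1) hr (by omega) (by omega)]
      push_cast
      ring

lemma Glem (m : ℕ) (hm : 2 ≤ m) : ∀ (J : ℕ) (β : ℕ → ℕ), (∀ i, i ≤ J → β i < m) →
    ∀ q, q = ∑ i ∈ Finset.range (J + 1), β i * m ^ i →
    ((Snat m (q + 1) : ZMod m)
      = 1 + ∑ i ∈ Finset.range (J + 1), ∏ t ∈ Finset.range (i + 1), (β t : ZMod m)) := by
  intro J
  induction J with
  | zero =>
    intro β hβ q hq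
    rw [Finset.sum_range_one, pow_zero, Nat.mul_one] at hq
    subst hq
    rw [Snat_small m hm _ (by have := hβ 0 le_rfl; omega)]
    simp only [zero_add, Finset.sum_range_one, Finset.prod_range_one]
    push_cast
    ring
  | succ J ihJ =>
    intro β hβ q hq
    set q' : ℕ := ∑ i ∈ Finset.range (J + 1), β (i + 1) * m ^ i with hq'
    have hdec : q = β 0 + m * q' := by
      rw [hq, Finset.sum_range_succ']
      have h2 : ∀ i ∈ Finset.range (J + 1), β (i+1) * m ^ (i+1) = m * (β (i+1) * m ^ i) := by
        intro i _
        rw [pow_succ]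
        ring
      rw [Finset.sum_congr rfl h2, ← Finset.mul_sum, pow_zero, Nat.mul_one]
      exact Nat.add_comm _ _
    have hmod : q % m = β 0 := by
      rw [hdec, Nat.add_mul_mod_self_left, Nat.mod_eq_of_lt (hβ 0 (by omega))]
    have hdiv : q / m = q' := by
      rw [hdec, Nat.add_mul_div_left _ _ (by omega : 0 < m),
        Nat.div_eq_of_lt (hβ 0 (by omega))]
      omega
    rw [Grec m hm q, hmod, hdiv]
    rw [ihJ (fun i => β (i + 1)) (fun i hi => hβ (i + 1) (by omega)) q' rfl]
    rw [Finset.sum_range_succ' (fun i => ∏ t ∈ Finset.range (i + 1), (β t : ZMod m))]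
    have hP : ∀ i, (∏ t ∈ Finset.range (i + 1 + 1), (β t : ZMod m))
        = (β 0 : ZMod m) * ∏ t ∈ Finset.range (i + 1), (β (t + 1) : ZMod m) := by
      intro i
      rw [Finset.prod_range_succ' (fun t => (β t : ZMod m))]
      ring
    rw [Finset.sum_congr rfl (fun i _ => hP i), ← Finset.mul_sum]
    simp only [zero_add, Finset.prod_range_one]
    ring

end zmod

lemma Smain (m : ℕ) (hm : 2 ≤ m) : ∀ (j : ℕ) (α : ℕ → ℕ) (n : ℕ), 0 < α j →
    (∀ i, i ≤ j → α i < m) → n = ∑ i ∈ Finset.range (j + 1), α i * m ^ i →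
    ((Snat m n : ZMod m) = (α 0 : ZMod m) + ((α 0 : ZMod m) - 1) *
      ∑ i ∈ Finset.range j, ∏ t ∈ Finset.range (i + 1),
        ((α (t + 1) : ZMod m) - (if α t = 0 then (1 : ZMod m) else 0))) := by
  intro j
  induction j with
  | zero =>
    intro α n hj hd hn
    rw [Finset.sum_range_one, pow_zero, Nat.mul_one] at hn
    subst hn
    rw [Snat_small m hm _ (by have := hd 0 le_rfl; omega)]
    simp
  | succ J ihJ =>
    intro α n hj hd hn
    set q : ℕ := ∑ i ∈ Finset.range (J + 1), α (i + 1) * m ^ i with hq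
    have hdec : n = α 0 + m * q := by
      rw [hn, Finset.sum_range_succ']
      have h2 : ∀ i ∈ Finset.range (J + 1), α (i+1) * m ^ (i+1) = m * (α (i+1) * m ^ i) := by
        intro i _
        rw [pow_succ]
        ring
      rw [Finset.sum_congr rfl h2, ← Finset.mul_sum, pow_zero, Nat.mul_one]
      exact Nat.add_comm _ _
    have hq0 : q ≠ 0 := by
      have h1 : α (J+1) * m ^ J ≤ q :=
        Finset.single_le_sum (f := fun i => α (i+1) * m ^ i) (fun i _ => Nat.zero_le _)
          (Finset.self_mem_range_succ J)
      have h2 : 0 < m ^ J := pow_pos (by omega) J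
      have h3 : 0 < α (J+1) * m ^ J := Nat.mul_pos hj h2
      omega
    have hdig : ∀ i, i ≤ J → α (i + 1) < m := fun i hi => hd (i + 1) (by omega)
    rcases eq_or_ne (α 0) 0 with hα0 | hα0
    · -- lowest digit zero
      have hn' : n = m * q := by omega
      rw [hn', C1 m hm q hq0, ihJ (fun i => α (i + 1)) q hj hdig rfl]
      rw [Finset.sum_range_succ'
        (fun i => ∏ t ∈ Finset.range (i + 1),
          ((α (t + 1) : ZMod m) - (if α t = 0 then (1 : ZMod m) else 0)))]
      have hQ : ∀ i, (∏ t ∈ Finset.range (i + 1 + 1),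
            ((α (t + 1) : ZMod m) - (if α t = 0 then (1 : ZMod m) else 0)))
          = (∏ t ∈ Finset.range (i + 1),
              ((α (t + 1 + 1) : ZMod m) - (if α (t + 1) = 0 then (1 : ZMod m) else 0)))
            * ((α 1 : ZMod m) - 1) := by
        intro i
        rw [Finset.prod_range_succ'
          (fun t => ((α (t + 1) : ZMod m) - (if α t = 0 then (1 : ZMod m) else 0)))]
        rw [if_pos hα0]
      rw [Finset.sum_congr rfl (fun i _ => hQ i)]
      simp only [zero_add, Finset.prod_range_one, if_pos hα0, hα0]
      rw [← Finset.sum_mul]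
      push_cast
      ring
    · -- lowest digit nonzero
      have hn' : n = m * q + α 0 := by omega
      rw [hn', C2 m hm q (α 0) hq0 (by omega) (by have := hd 0 (by omega); omega),
        Glem m hm J (fun i => α (i + 1)) hdig q rfl]
      have hprod : ∀ i, (∏ t ∈ Finset.range (i + 1),
            ((α (t + 1) : ZMod m) - (if α t = 0 then (1 : ZMod m) else 0)))
          = ∏ t ∈ Finset.range (i + 1), (α (t + 1) : ZMod m) := by
        intro i
        by_cases hz : ∃ t, t < i + 1 ∧ α t = 0
        · obtain ⟨t0, ht0, ht0z⟩ := hz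
          have hex : ∃ t, α t = 0 := ⟨t0, ht0z⟩
          have hs : α (Nat.find hex) = 0 := Nat.find_spec hex
          have hmin : ∀ u, u < Nat.find hex → α u ≠ 0 := fun u hu => Nat.find_min hex hu
          have hs0 : Nat.find hex ≠ 0 := by
            intro h
            rw [h] at hs
            exact hα0 hs
          have hst : Nat.find hex ≤ t0 := Nat.find_min' hex ht0z
          obtain ⟨s', hs'⟩ : ∃ s', Nat.find hex = s' + 1 := ⟨Nat.find hex - 1, by omega⟩
          rw [hs'] at hs
          have hmem : s' ∈ Finset.range (i + 1) := Finset.mem_range.2 (by omega)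
          rw [Finset.prod_eq_zero hmem, Finset.prod_eq_zero hmem]
          · rw [hs]
            simp
          · rw [hs, if_neg (hmin s' (by omega))]
            simp
        · push_neg at hz
          apply Finset.prod_congr rfl
          intro t ht
          rw [if_neg (hz t (Finset.mem_range.1 ht))]
          ring
      rw [Finset.sum_congr rfl (fun i _ => hprod i)]
      ring

theorem cm_congruence (m n j : ℕ) (α : ℕ → ℕ) (hm : 2 ≤ m) (hj : 0 < α j) (hd : ∀ i, i ≤ j → α i < m)
    (hn : n = ∑ i ∈ Finset.range (j + 1), α i * m ^ i) :
    (cm m (m * n) : ℤ) ≡ (α 0 : ℤ) + ((α 0 : ℤ) - 1) *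
      ∑ i ∈ Finset.Icc 1 j, ∏ t ∈ Finset.Icc 1 i, ((α t : ℤ) - (chi α t : ℤ))
      [ZMOD (m : ℤ)] := by
  have hn0 : n ≠ 0 := by
    have h1 : α j * m ^ j ≤ n := by
      rw [hn]
      exact Finset.single_le_sum (f := fun i => α i * m ^ i) (fun i _ => Nat.zero_le _)
        (Finset.self_mem_range_succ j)
    have h2 : 0 < m ^ j := pow_pos (by omega) j
    have h3 : 0 < α j * m ^ j := Nat.mul_pos hj h2
    omega
  have hcm : cm m (m * n) = Snat m n := by
    rw [cm_eq_cRec m hm, cRec_pos m _ (Nat.mul_ne_zero (by omega) hn0)]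
    have hdiv : (m * n + m - 1) / m = n := by
      have h1 : m * n + m - 1 = m * n + (m - 1) := by omega
      rw [h1, Nat.mul_add_div (by omega), Nat.div_eq_of_lt (by omega)]
      omega
    rw [hdiv]
    rfl
  have hmain := Smain m hm j α n hj hd hn
  rw [← ZMod.intCast_eq_intCast_iff]
  push_cast
  rw [hcm, hmain]
  congr 1
  congr 1
  -- sums: Icc vs range
  rw [← Finset.Ico_add_one_right_eq_Icc, Finset.sum_Ico_eq_sum_range]
  have hjj : j + 1 - 1 = j := by omega
  rw [hjj]
  apply Finset.sum_congr rfl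
  intro i _
  rw [← Finset.Ico_add_one_right_eq_Icc, Finset.prod_Ico_eq_prod_range]
  have hii : 1 + i + 1 - 1 = i + 1 := by omega
  rw [hii]
  apply Finset.prod_congr rfl
  intro t _
  have ht : 1 + t = t + 1 := by omega
  rw [ht, chi]
  have ht2 : t + 1 - 1 = t := by omega
  rw [ht2]
  push_cast
  split <;> simp
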